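/- Let H be a Hilbert space carrying a unitary representation σ of a locally compact group K, and let K' be a normal subgroup of K. Suppose H = H₁ ⊕ H₂ is an orthogonal decomposition into closed σ(K')-invariant subspaces, and that for every a ∈ K the representation σ₁^a of K' on H₁ defined by σ₁^a(x) = σ₁(a⁻¹xa) admits no nonzero K'-intertwining operator into σ₂ (the representation of K' on H₂). Then H₁ and H₂ are invariant under σ(K). -/

import Mathlib

private lemma sigma_mul_apply {K H : Type*} [Group K] [NormedAddCommGroup H]
    [InnerProductSpace ℂ H] (σ : K →* (H ≃ₗᵢ[ℂ] H)) (a b : K) (u : H) :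
    σ (a * b) u = σ a (σ b u) := by rw [map_mul]; rfl

/-- If `H = H₁ ⊕ H₁ᗮ` is an orthogonal decomposition into closed subspaces
invariant under a normal subgroup `K'` of `K` (acting by a unitary
representation `σ`), and for every `a ∈ K` there is no nonzero bounded
`K'`-intertwining operator from `σ₁ᵃ` (the `K'`-action `x ↦ σ(a⁻¹xa)` on `H₁`)
to `σ₂` (the `K'`-action on `H₂ = H₁ᗮ`), then `H₁` and `H₂ = H₁ᗮ` are invariant
under all of `σ(K)`. -/
theorem stmt_10 {K H : Type*} [Group K] [NormedAddCommGroup H]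
    [InnerProductSpace ℂ H] [CompleteSpace H]
    (K' : Subgroup K) (hn : K'.Normal)
    (σ : K →* (H ≃ₗᵢ[ℂ] H))
    (H₁ : Submodule ℂ H) (hH₁ : IsClosed (H₁ : Set H))
    (hinv1 : ∀ x ∈ K', ∀ v ∈ H₁, σ x v ∈ H₁)
    (hinv2 : ∀ x ∈ K', ∀ v ∈ H₁ᗮ, σ x v ∈ H₁ᗮ)
    (hno : ∀ a : K, ∀ T : H →L[ℂ] H,
      (∀ v : H, T v ∈ H₁ᗮ) →
      (∀ x ∈ K', ∀ v ∈ H₁, T (σ (a⁻¹ * x * a) v) = σ x (T v)) →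
      (∀ v ∈ H₁, T v = 0)) :
    (∀ g : K, ∀ v ∈ H₁, σ g v ∈ H₁) ∧ (∀ g : K, ∀ v ∈ H₁ᗮ, σ g v ∈ H₁ᗮ) := by
  haveI : CompleteSpace H₁ := hH₁.completeSpace_coe
  have horth : H₁ᗮᗮ = H₁ := Submodule.orthogonal_orthogonal H₁
  -- P : orthogonal projection onto H₁ᗮ, as a map H →L H
  set P : H →L[ℂ] H := H₁ᗮ.subtypeL.comp (Submodule.orthogonalProjectionOnto H₁ᗮ) with hPdef
  have hPmem : ∀ w : H, P w ∈ H₁ᗮ := fun w => (Submodule.orthogonalProjectionOnto H₁ᗮ w).2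
  have hPsub : ∀ w : H, w - P w ∈ H₁ := by
    intro w
    have := Submodule.sub_starProjection_mem_orthogonal (K := H₁ᗮ) w
    rwa [horth] at this
  have hPzero : ∀ u ∈ H₁, P u = 0 := by
    intro u hu
    have : u ∈ H₁ᗮᗮ := by rw [horth]; exact hu
    simp only [hPdef, ContinuousLinearMap.comp_apply,
      Submodule.orthogonalProjectionOnto_apply_of_mem_orthogonal this]
    simp
  have hPid : ∀ u ∈ H₁ᗮ, P u = u := by
    intro u hu
    simpa [hPdef] using (Submodule.starProjection_eq_self_iff (K := H₁ᗮ)).2 hu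
  -- key projection commutation with σ x for x ∈ K'
  have hPcomm : ∀ x ∈ K', ∀ w : H, P (σ x w) = σ x (P w) := by
    intro x hx w
    have hdec : σ x w = σ x (w - P w) + σ x (P w) := by
      rw [← map_add, sub_add_cancel]
    rw [hdec, map_add, hPzero _ (hinv1 x hx _ (hPsub w)),
      hPid _ (hinv2 x hx _ (hPmem w)), zero_add]
  have key : ∀ g : K, ∀ v ∈ H₁, σ g v ∈ H₁ := by
    intro a v hv
    set T : H →L[ℂ] H :=
      P.comp ((σ a).toContinuousLinearEquiv : H →L[ℂ] H) with hTdef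
    have hT0 : T v = 0 := by
      refine hno a T (fun w => hPmem _) ?_ v hv
      intro x hx u hu
      have hmm : σ a (σ (a⁻¹ * x * a) u) = σ x (σ a u) := by
        rw [← sigma_mul_apply, ← sigma_mul_apply]
        congr 1
        group
      show P (σ a (σ (a⁻¹ * x * a) u)) = σ x (P (σ a u))
      rw [hmm, hPcomm x hx]
    have := hPsub (σ a v)
    have hPv : P (σ a v) = 0 := by
      simpa [hTdef] using hT0
    rwa [hPv, sub_zero] at this
  refine ⟨key, fun g v hv => ?_⟩
  rw [Submodule.mem_orthogonal]
  intro u hu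
  have h1 : σ g (σ g⁻¹ u) = u := by
    rw [← sigma_mul_apply]
    simp
  calc inner ℂ u (σ g v) = inner ℂ (σ g (σ g⁻¹ u)) (σ g v) := by rw [h1]
    _ = inner ℂ (σ g⁻¹ u) v := (σ g).inner_map_map _ _
    _ = (0 : ℂ) := hv _ (key g⁻¹ u hu)
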